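/- Let λ ∈ ]0,n−1[ and let Ω be a bounded open Lipschitz subset of ℝ^n with cl Ω ⊆ Q. Let h ∈ A^1_{q,λ}. Let φ be the restriction to cl Q \ Ω of a q-periodic function of class C^1 on cl S[Ω]^−, where S[Ω]^− ≡ ℝ^n \ cl(⋃_{z∈ℤ^n}(qz+Ω)). Then ∫_{∂Q} h(x−y) φ(y) (ν_Q)_j(y) dσ_y = 0 for all x ∈ ℝ^n and all j ∈ {1,…,n}. -/

import Mathlib

open MeasureTheory Set Pointwise Filter

noncomputable section

abbrev Euc (n : ℕ) := EuclideanSpace ℝ (Fin n)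

variable {n : ℕ}

/-- The lattice `qℤⁿ`. -/
def qLat (q : Fin n → ℝ) : Set (Euc n) :=
  {x | ∃ z : Fin n → ℤ, ∀ i, x i = q i * z i}

/-- The fundamental cell `Q = ∏ ]0, qᵢ[`. -/
def cellQ (q : Fin n → ℝ) : Set (Euc n) := {x | ∀ i, x i ∈ Set.Ioo 0 (q i)}

/-- `Q̃ = ∏ ]-qᵢ/2, qᵢ/2[`. -/
def cellQt (q : Fin n → ℝ) : Set (Euc n) := {x | ∀ i, x i ∈ Set.Ioo (-(q i) / 2) (q i / 2)}

/-- `u` is `q`-periodic on `S`. -/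
def qPerOn (q : Fin n → ℝ) (S : Set (Euc n)) (u : Euc n → ℝ) : Prop :=
  ∀ x ∈ S, ∀ j : Fin n, u (x + EuclideanSpace.single j (q j)) = u x

/-- membership in `A⁰_{q,λ}` -/
def memA0 (q : Fin n → ℝ) (lam : ℝ) (h : Euc n → ℝ) : Prop :=
  ContinuousOn h (qLat q)ᶜ ∧ qPerOn q (qLat q)ᶜ h ∧
    ∃ M : ℝ, ∀ x ∈ cellQt q \ {0}, |h x| * ‖x‖ ^ lam ≤ M

/-- the norm of `A⁰_{q,λ}` -/
def a0Norm (q : Fin n → ℝ) (lam : ℝ) (h : Euc n → ℝ) : ℝ :=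
  sSup ((fun x : Euc n => |h x| * ‖x‖ ^ lam) '' (cellQt q \ {0}))

/-- partial derivative in the `j`-th coordinate direction -/
def pd (j : Fin n) (u : Euc n → ℝ) : Euc n → ℝ :=
  fun x => fderiv ℝ u x (EuclideanSpace.single j 1)

/-- membership in `A¹_{q,λ}` -/
def memA1 (q : Fin n → ℝ) (lam : ℝ) (h : Euc n → ℝ) : Prop :=
  ContDiffOn ℝ 1 h (qLat q)ᶜ ∧ memA0 q lam h ∧ ∀ j : Fin n, memA0 q (lam + 1) (pd j h)

/-- the norm of `A¹_{q,λ}` -/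
def a1Norm (q : Fin n → ℝ) (lam : ℝ) (h : Euc n → ℝ) : ℝ :=
  a0Norm q lam h + ∑ j : Fin n, a0Norm q (lam + 1) (pd j h)

/-- the periodic volume potential `P⁺[h,φ]` -/
def Pplus (Ω : Set (Euc n)) (h φ : Euc n → ℝ) : Euc n → ℝ :=
  fun x => ∫ y in Ω, h (x - y) * φ y

/-- the periodic volume potential `P⁻[h,φ]` -/
def Pminus (q : Fin n → ℝ) (Ω : Set (Euc n)) (h φ : Euc n → ℝ) : Euc n → ℝ :=
  fun x => ∫ y in cellQ q \ closure Ω, h (x - y) * φ y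

/-- the periodic union `S[Ω] = ⋃_z (qz + Ω)` -/
def Sper (q : Fin n → ℝ) (Ω : Set (Euc n)) : Set (Euc n) :=
  ⋃ z : Fin n → ℤ, ((show Euc n from WithLp.toLp 2 (fun i => q i * z i)) +ᵥ Ω)

/-- `S[Ω]⁻ = ℝⁿ \ cl S[Ω]` -/
def SperM (q : Fin n → ℝ) (Ω : Set (Euc n)) : Set (Euc n) :=
  (closure (Sper q Ω))ᶜ

/-- the multi-index partial derivative `D^β u` -/
def mderiv (β : Fin n → ℕ) (u : Euc n → ℝ) : Euc n → ℝ :=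
  (List.finRange n).foldr (fun j v => (pd j)^[β j] v) u

/-- Roumieu-type bound `ρ^{|β|}/|β|! · |D^β u| ≤ M` on `W` -/
def rouBound (ρ : ℝ) (W : Set (Euc n)) (u : Euc n → ℝ) (M : ℝ) : Prop :=
  ∀ β : Fin n → ℕ, ∀ x ∈ W,
    ρ ^ (∑ j, β j) / (Nat.factorial (∑ j, β j) : ℝ) * |mderiv β u x| ≤ M

/-- the Roumieu norm on `W` -/
def rouNorm (ρ : ℝ) (W : Set (Euc n)) (u : Euc n → ℝ) : ℝ :=
  sSup ((fun p : (Fin n → ℕ) × Euc n =>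
    ρ ^ (∑ j, p.1 j) / (Nat.factorial (∑ j, p.1 j) : ℝ) * |mderiv p.1 u p.2|) ''
    {p : (Fin n → ℕ) × Euc n | p.2 ∈ W})

/-- membership in the Roumieu class `C⁰_{ω,ρ}(cl V)` -/
def memRou (ρ : ℝ) (V : Set (Euc n)) (u : Euc n → ℝ) : Prop :=
  ContDiffOn ℝ ⊤ u (closure V) ∧ ∃ M : ℝ, rouBound ρ V u M

/-- membership in the class `H^{λ,ρ}_q(G)` -/
def memH (q : Fin n → ℝ) (lam ρ : ℝ) (G : Set (Euc n)) (h : Euc n → ℝ) : Prop :=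
  memA1 q lam h ∧ memRou ρ G h

/-- the norm of `H^{λ,ρ}_q(G)` -/
def hNorm (q : Fin n → ℝ) (lam ρ : ℝ) (G : Set (Euc n)) (h : Euc n → ℝ) : ℝ :=
  a1Norm q lam h + rouNorm ρ G h

/-- membership in the periodic Roumieu class `C⁰_{q,ω,ρ}(cl S[V])` -/
def memRouPer (q : Fin n → ℝ) (ρ : ℝ) (V : Set (Euc n)) (u : Euc n → ℝ) : Prop :=
  qPerOn q (closure (Sper q V)) u ∧ ContDiffOn ℝ ⊤ u (closure (Sper q V)) ∧
    ∃ M : ℝ, rouBound ρ (Sper q V) u M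

/-- membership in the periodic Roumieu class `C⁰_{q,ω,ρ}(cl S[V]⁻)` -/
def memRouPerM (q : Fin n → ℝ) (ρ : ℝ) (V : Set (Euc n)) (u : Euc n → ℝ) : Prop :=
  qPerOn q (closure (SperM q V)) u ∧ ContDiffOn ℝ ⊤ u (closure (SperM q V)) ∧
    ∃ M : ℝ, rouBound ρ (SperM q V) u M

/-- Gauss–Green data `(σ, ν)` for a (Lipschitz) bounded open set `Ω`: `σ` is the
surface measure on `∂Ω` and `ν` the a.e. defined outward unit normal, linked by the
divergence theorem. -/
def GaussGreen (Ω : Set (Euc n)) (σ : Measure (Euc n)) (ν : Euc n → Euc n) : Prop :=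
  (∀ᵐ y ∂σ, y ∈ frontier Ω ∧ ‖ν y‖ = 1) ∧
    ∀ F : Euc n → ℝ, ContDiffOn ℝ 1 F (closure Ω) →
      ∀ j : Fin n, (∫ y in Ω, pd j F y) = ∫ y, F y * ν y j ∂σ

/-- integral over the face `{y ∈ ∂Q : y j = c}` of the cell. -/
def faceIntegral (q : Fin n → ℝ) (j : Fin n) (c : ℝ) (F : Euc n → ℝ) : ℝ :=
  ∫ z : {i : Fin n // i ≠ j} → ℝ in Set.univ.pi (fun i => Set.Ioo 0 (q i.1)),
    F (show Euc n from WithLp.toLp 2 (fun i => if hij : i = j then c else z ⟨i, hij⟩))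

/-- `∫_{∂Q} F (ν_Q)_j dσ`, written concretely as the difference of two face integrals. -/
def bdryQIntegral (q : Fin n → ℝ) (j : Fin n) (F : Euc n → ℝ) : ℝ :=
  faceIntegral q j (q j) F - faceIntegral q j 0 F


/-- coordinate distance is at most the Euclidean distance -/
lemma coord_dist_le {n : ℕ} (x y : Euc n) (j : Fin n) : dist (x j) (y j) ≤ dist x y := by
  rw [EuclideanSpace.dist_eq]
  have h1 : dist (x j) (y j) = Real.sqrt (dist (x j) (y j) ^ 2) :=
    (Real.sqrt_sq dist_nonneg).symm
  rw [h1]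
  exact Real.sqrt_le_sqrt
    (Finset.single_le_sum (f := fun i => dist (x i) (y i) ^ 2)
      (fun i _ => sq_nonneg _) (Finset.mem_univ j))

/-- the embedding of the face coordinates into `Euc n` -/
def faceEmb {n : ℕ} (j : Fin n) (z : {i : Fin n // i ≠ j} → ℝ) (c : ℝ) : Euc n :=
  WithLp.toLp 2 (fun i => if hij : i = j then c else z ⟨i, hij⟩)

/-- Remark after Lemma 3.7. If `φ` is (the restriction to
`cl Q \ Ω` of) a `q`-periodic function of class `C¹` on `cl S[Ω]⁻`, then
`∫_{∂Q} h(x-y) φ(y) (ν_Q)ⱼ(y) dσ_y = 0` for all `x ∈ ℝⁿ` and all `j`; the boundary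
integral on `∂Q` is written concretely as a difference of face integrals. -/
theorem stmt14 (n : ℕ) (hn : 2 ≤ n) (q : Fin n → ℝ) (hq : ∀ i, 0 < q i)
    (lam : ℝ) (hl0 : 0 < lam) (hln : lam < (n : ℝ) - 1)
    (Ω : Set (Euc n)) (hΩo : IsOpen Ω) (hΩb : Bornology.IsBounded Ω)
    (hΩQ : closure Ω ⊆ cellQ q)
    (h : Euc n → ℝ) (hh : memA1 q lam h)
    (φ : Euc n → ℝ) (hφper : qPerOn q (closure (SperM q Ω)) φ)
    (hφ : ContDiffOn ℝ 1 φ (closure (SperM q Ω))) :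
    ∀ x : Euc n, ∀ j : Fin n,
      bdryQIntegral q j (fun y => h (x - y) * φ y) = 0 := by
  intro x j
  -- a positive distance between `closure Ω` and the complement of the cell
  have hcellO : IsOpen (cellQ q) := by
    have : cellQ q = ⋂ i : Fin n, (fun y : Euc n => y i) ⁻¹' Set.Ioo 0 (q i) := by
      ext y; simp [cellQ]
    rw [this]
    exact isOpen_iInter_of_finite fun i =>
      (isOpen_Ioo).preimage ((continuous_apply i).comp (PiLp.continuous_ofLp 2 _))
  have hcomp : IsCompact (closure Ω) := hΩb.isCompact_closure
  obtain ⟨ε, hε0, hthk⟩ := hcomp.exists_thickening_subset_open hcellO hΩQ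
  -- coordinate bounds on points of Ω
  have hub : ∀ u ∈ Ω, ε / 2 ≤ u j ∧ u j ≤ q j - ε / 2 := by
    intro u hu
    have h1 : ∀ t : ℝ, |t| < ε → u + EuclideanSpace.single j t ∈ cellQ q := by
      intro t ht
      apply hthk
      apply Metric.ball_subset_thickening (subset_closure hu) ε
      rw [Metric.mem_ball, dist_eq_norm, add_sub_cancel_left, EuclideanSpace.norm_single]
      exact ht
    have h2 := h1 (ε / 2) (by rw [abs_of_pos (by linarith)]; linarith)
    have h3 := h1 (-(ε / 2)) (by rw [abs_of_neg (by linarith)]; linarith)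
    have h2j := h2 j
    have h3j := h3 j
    rw [PiLp.add_apply, EuclideanSpace.single_apply, if_pos rfl] at h2j h3j
    constructor
    · linarith [h3j.1]
    · linarith [h2j.2]
  -- points of `Sper q Ω` have `j`-th coordinate at least `ε/2` in absolute value
  have hSper : ∀ w ∈ Sper q Ω, ε / 2 ≤ |w j| := by
    intro w hw
    obtain ⟨z, hwz⟩ := Set.mem_iUnion.mp hw
    obtain ⟨u, hu, huw⟩ := Set.mem_vadd_set.mp hwz
    have hwj : w j = q j * z j + u j := by
      rw [← huw, vadd_eq_add, PiLp.add_apply]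
    obtain ⟨hu1, hu2⟩ := hub u hu
    rcases le_or_gt 0 (z j) with hz | hz
    · have : (0 : ℝ) ≤ q j * z j :=
        mul_nonneg (hq j).le (by exact_mod_cast hz)
      have : ε / 2 ≤ w j := by rw [hwj]; linarith
      exact this.trans (le_abs_self _)
    · have hzi : z j ≤ -1 := by omega
      have hz1 : (z j : ℝ) ≤ -1 := by exact_mod_cast hzi
      have : q j * z j ≤ -q j := by nlinarith [(hq j)]
      have hwle : w j ≤ -(ε / 2) := by rw [hwj]; linarith
      calc ε / 2 ≤ -(w j) := by linarith
        _ ≤ |w j| := neg_le_abs _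
  -- any point with vanishing `j`-th coordinate lies in `closure (SperM q Ω)`
  have hface : ∀ y : Euc n, y j = 0 → y ∈ closure (SperM q Ω) := by
    intro y hy
    apply subset_closure
    show y ∉ closure (Sper q Ω)
    intro hyc
    obtain ⟨w, hwS, hwd⟩ := Metric.mem_closure_iff.mp hyc (ε / 2) (by linarith)
    have h1 : |w j| ≤ dist y w := by
      have := coord_dist_le y w j
      rw [hy, Real.dist_eq, zero_sub, abs_neg] at this
      exact this
    linarith [hSper w hwS]
  -- choose a coordinate different from `j`
  obtain ⟨i₀, hi₀⟩ : ∃ i : Fin n, i ≠ j := by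
    have : Nontrivial (Fin n) := Fin.nontrivial_iff_two_le.mpr hn
    exact exists_ne j
  set i₀' : {i : Fin n // i ≠ j} := ⟨i₀, hi₀⟩ with hi₀'
  set C : Set ℝ := Set.range (fun m : ℤ => x i₀ - q i₀ * m) with hC
  set N : Set ({i : Fin n // i ≠ j} → ℝ) := {z | z i₀' ∈ C} with hN
  have hNnull : volume N = 0 := by
    have hNeq : N = Set.pi Set.univ (fun i => if i = i₀' then C else Set.univ) := by
      ext z
      constructor
      · intro hz i _
        by_cases h' : i = i₀'
        · subst h'; simpa [hN] using hz
        · simp [h']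
      · intro hz
        have := hz i₀' (Set.mem_univ _)
        simpa [hN] using this
    rw [hNeq, volume_pi_pi]
    apply Finset.prod_eq_zero (Finset.mem_univ i₀')
    rw [if_pos rfl]
    exact (Set.countable_range _).measure_zero _
  -- the embedding facts
  have hembj : ∀ (z : {i : Fin n // i ≠ j} → ℝ) (c : ℝ), faceEmb j z c j = c := by
    intro z c; simp [faceEmb]
  have hadd : ∀ z : {i : Fin n // i ≠ j} → ℝ,
      faceEmb j z (q j) = faceEmb j z 0 + EuclideanSpace.single j (q j) := by
    intro z
    ext i
    rw [PiLp.add_apply, EuclideanSpace.single_apply]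
    by_cases hij : i = j
    · subst hij; simp [faceEmb]
    · simp [faceEmb, hij]
  -- pointwise equality off the null set `N`
  have key : ∀ z : {i : Fin n // i ≠ j} → ℝ, z ∉ N →
      h (x - faceEmb j z (q j)) * φ (faceEmb j z (q j)) =
      h (x - faceEmb j z 0) * φ (faceEmb j z 0) := by
    intro z hz
    have hy0 : (faceEmb j z 0) j = 0 := hembj z 0
    have hlat : x - faceEmb j z (q j) ∈ (qLat q)ᶜ := by
      intro hx
      obtain ⟨m, hm⟩ := hx
      apply hz
      have hmi := hm i₀
      rw [PiLp.sub_apply] at hmi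
      have hei : faceEmb j z (q j) i₀ = z i₀' := by simp [faceEmb, hi₀, hi₀']
      rw [hei] at hmi
      exact ⟨m i₀, by show x i₀ - q i₀ * (m i₀ : ℝ) = z i₀'; linarith⟩
    have hheq : h (x - faceEmb j z 0) = h (x - faceEmb j z (q j)) := by
      have hx0 : x - faceEmb j z 0 =
          (x - faceEmb j z (q j)) + EuclideanSpace.single j (q j) := by
        rw [hadd z]; abel
      rw [hx0]
      exact hh.2.1.2.1 _ hlat j
    have hφeq : φ (faceEmb j z (q j)) = φ (faceEmb j z 0) := by
      rw [hadd z]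
      exact hφper _ (hface _ hy0) j
    rw [hheq, hφeq]
  -- conclude
  simp only [bdryQIntegral, faceIntegral]
  rw [sub_eq_zero]
  apply integral_congr_ae
  apply ae_restrict_of_ae
  have hNae : ∀ᵐ z : {i : Fin n // i ≠ j} → ℝ, z ∉ N := by
    rw [ae_iff]
    simpa using hNnull
  filter_upwards [hNae] with z hz
  exact key z hz

end
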